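/- Let (V, ⟨·,·⟩, A) be an indecomposable Jacobi–Ricci commuting model with Ricci operator ρ. Then either there exists a₁ ∈ ℝ such that the spectrum of the complexification of ρ acting on V ⊗ ℂ equals {a₁}, or there exist a₁ ∈ ℝ and a₂ > 0 such that this spectrum equals {a₁ + a₂·i, a₁ − a₂·i}. -/

import Mathlib

open TensorProduct

/-- `f : W⁴ → ℝ` is multilinear over `ℝ` in each of its four slots. -/
def IsML {W : Type*} [AddCommGroup W] [Module ℝ W] (f : W → W → W → W → ℝ) : Prop :=
  (∀ x x' y z w, f (x + x') y z w = f x y z w + f x' y z w) ∧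
  (∀ (c : ℝ) x y z w, f (c • x) y z w = c * f x y z w) ∧
  (∀ x y y' z w, f x (y + y') z w = f x y z w + f x y' z w) ∧
  (∀ (c : ℝ) x y z w, f x (c • y) z w = c * f x y z w) ∧
  (∀ x y z z' w, f x y (z + z') w = f x y z w + f x y z' w) ∧
  (∀ (c : ℝ) x y z w, f x y (c • z) w = c * f x y z w) ∧
  (∀ x y z w w', f x y z (w + w') = f x y z w + f x y z w') ∧
  (∀ (c : ℝ) x y z w, f x y z (c • w) = c * f x y z w)

/-- The symmetries of the Riemann curvature tensor. -/
def IsCurvSym {W : Type*} [AddCommGroup W] [Module ℝ W] (f : W → W → W → W → ℝ) : Prop :=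
  (∀ x y z w, f x y z w = - f y x z w) ∧
  (∀ x y z w, f x y z w = f z w x y) ∧
  (∀ x y z w, f x y z w + f y z x w + f z x y w = 0)

/-- An algebraic curvature tensor: a multilinear map with the curvature symmetries. -/
def IsACT {W : Type*} [AddCommGroup W] [Module ℝ W] (f : W → W → W → W → ℝ) : Prop :=
  IsML f ∧ IsCurvSym f

/-- The defining value of `⟨ρ x, y⟩`: the trace of `z ↦ ½𝓡(z,x)y + ½𝓡(z,y)x`,
where `R` is the (curried) curvature operator. -/
noncomputable def ricciForm {V : Type*} [AddCommGroup V] [Module ℝ V]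
    (R : V →ₗ[ℝ] V →ₗ[ℝ] V →ₗ[ℝ] V) (x y : V) : ℝ :=
  LinearMap.trace ℝ V
    (((1 : ℝ) / 2) • ((R.flip x).flip y) + ((1 : ℝ) / 2) • ((R.flip y).flip x))

/-- The Jacobi--Ricci commuting identity of Lemma 1 (3). -/
def JRComm {V : Type*} [AddCommGroup V] [Module ℝ V]
    (A : V → V → V → V → ℝ) (ρ : V →ₗ[ℝ] V) : Prop :=
  ∀ v₁ v₂ v₃ v₄ : V,
    A (ρ v₁) v₂ v₃ v₄ = A v₁ (ρ v₂) v₃ v₄ ∧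
    A v₁ (ρ v₂) v₃ v₄ = A v₁ v₂ (ρ v₃) v₄ ∧
    A v₁ v₂ (ρ v₃) v₄ = A v₁ v₂ v₃ (ρ v₄)

/-- A model is decomposable if it splits as an orthogonal direct sum of two nontrivial
pieces on which the curvature tensor decouples. -/
def Decomposable {V : Type*} [AddCommGroup V] [Module ℝ V]
    (B : LinearMap.BilinForm ℝ V) (A : V → V → V → V → ℝ) : Prop :=
  ∃ V₁ V₂ : Submodule ℝ V, V₁ ≠ ⊥ ∧ V₂ ≠ ⊥ ∧ IsCompl V₁ V₂ ∧
    (∀ x ∈ V₁, ∀ y ∈ V₂, B x y = 0) ∧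
    (∀ (v : Fin 4 → V) (i j : Fin 4), i ≠ j → v i ∈ V₁ → v j ∈ V₂ →
      A (v 0) (v 1) (v 2) (v 3) = 0)

open Polynomial in
/-- The spectrum of the complexification of a real operator is closed under conjugation. -/
lemma conj_mem_spectrum_aux {V : Type*} [AddCommGroup V] [Module ℝ V] [FiniteDimensional ℝ V]
    (ρ : V →ₗ[ℝ] V) {μ : ℂ} (h : μ ∈ spectrum ℂ (ρ.baseChange ℂ)) :
    (starRingEnd ℂ) μ ∈ spectrum ℂ (ρ.baseChange ℂ) := by
  set ρc : Module.End ℂ (ℂ ⊗[ℝ] V) := ρ.baseChange ℂ with hρc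
  have h1 : Module.End.HasEigenvalue ρc μ := Module.End.HasEigenvalue.of_mem_spectrum h
  obtain ⟨x, hx⟩ := h1.exists_hasEigenvector
  have hx1 : ρc x = μ • x := Module.End.mem_eigenspace_iff.1 hx.1
  set σ : ℂ ⊗[ℝ] V →ₗ[ℝ] ℂ ⊗[ℝ] V :=
    TensorProduct.map (Complex.conjAe.toLinearMap) LinearMap.id with hσ
  have hσt : ∀ (c : ℂ) (v : V), σ (c ⊗ₜ[ℝ] v) = (starRingEnd ℂ) c ⊗ₜ[ℝ] v := by
    intro c v; simp [hσ, TensorProduct.map_tmul]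
  have hσσ : ∀ y, σ (σ y) = y := by
    intro y
    induction y using TensorProduct.induction_on with
    | zero => simp
    | tmul c v => simp [hσt]
    | add a b ha hb => simp [map_add, ha, hb]
  have hσs : ∀ (c : ℂ) y, σ (c • y) = (starRingEnd ℂ) c • σ y := by
    intro c y
    induction y using TensorProduct.induction_on with
    | zero => simp
    | tmul d v => rw [TensorProduct.smul_tmul', hσt, hσt, TensorProduct.smul_tmul']
                  simp [smul_eq_mul, map_mul]
    | add a b ha hb => simp [map_add, smul_add, ha, hb]
  have hσρ : ∀ y, σ (ρc y) = ρc (σ y) := by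
    intro y
    induction y using TensorProduct.induction_on with
    | zero => simp
    | tmul c v => rw [hρc]; simp [LinearMap.baseChange_tmul, hσt]
    | add a b ha hb => simp [map_add, ha, hb]
  have hy : ρc (σ x) = (starRingEnd ℂ) μ • σ x := by
    rw [← hσρ, hx1, hσs]
  have hy0 : σ x ≠ 0 := by
    intro h0
    apply hx.2
    have := congrArg σ h0
    rwa [hσσ, map_zero] at this
  have : Module.End.HasEigenvalue ρc ((starRingEnd ℂ) μ) :=
    Module.End.hasEigenvalue_of_hasEigenvector ⟨Module.End.mem_eigenspace_iff.2 hy, hy0⟩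
  exact Module.End.hasEigenvalue_iff_mem_spectrum.1 this

open Polynomial in
/-- If every complex root of (the complexification of) the minimal polynomial of `ρ` is a
root of a single irreducible real polynomial `p`, then the spectrum of the complexification
of `ρ` is either a single real point or a conjugate pair. -/
lemma spec_cases_aux {V : Type*} [AddCommGroup V] [Module ℝ V] [FiniteDimensional ℝ V]
    [Nontrivial V] (ρ : V →ₗ[ℝ] V) (p : ℝ[X]) (hpirr : Irreducible p)
    (hm : ∀ μ : ℂ, ((minpoly ℝ ρ).map (algebraMap ℝ ℂ)).IsRoot μ → aeval μ p = 0) :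
    (∃ a₁ : ℝ, spectrum ℂ (LinearMap.baseChange ℂ ρ) = {(a₁ : ℂ)}) ∨
    (∃ a₁ a₂ : ℝ, 0 < a₂ ∧
      spectrum ℂ (LinearMap.baseChange ℂ ρ) =
        {(a₁ : ℂ) + (a₂ : ℂ) * Complex.I, (a₁ : ℂ) - (a₂ : ℂ) * Complex.I}) := by
  haveI hnt : Nontrivial (ℂ ⊗[ℝ] V) := by
    have h4 : 0 < Module.finrank ℂ (ℂ ⊗[ℝ] V) := by
      rw [Module.finrank_baseChange]; exact Module.finrank_pos
    exact Module.nontrivial_of_finrank_pos h4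
  set ρc : Module.End ℂ (ℂ ⊗[ℝ] V) := ρ.baseChange ℂ with hρc
  set S := spectrum ℂ (ρ.baseChange ℂ) with hS
  have hann : aeval ρc ((minpoly ℝ ρ).map (algebraMap ℝ ℂ)) = 0 := by
    rw [aeval_map_algebraMap]
    have := Polynomial.aeval_algHom_apply (Module.End.baseChangeHom ℝ ℂ V) ρ (minpoly ℝ ρ)
    rw [minpoly.aeval, map_zero] at this
    exact this
  have hdvd : minpoly ℂ ρc ∣ (minpoly ℝ ρ).map (algebraMap ℝ ℂ) := minpoly.dvd _ _ hann
  have hroot : ∀ μ ∈ S, aeval μ p = 0 := by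
    intro μ hμ
    have h1 : (minpoly ℂ ρc).IsRoot μ :=
      Module.End.hasEigenvalue_iff_isRoot.1 (Module.End.HasEigenvalue.of_mem_spectrum hμ)
    exact hm μ (h1.dvd hdvd)
  have hne : S.Nonempty := by
    obtain ⟨μ, hμ⟩ := Module.End.exists_eigenvalue ρc
    exact ⟨μ, Module.End.hasEigenvalue_iff_mem_spectrum.1 hμ⟩
  obtain ⟨μ₀, hμ₀⟩ := hne
  by_cases him : μ₀.im = 0
  · left
    refine ⟨μ₀.re, ?_⟩
    have hμre : (μ₀.re : ℂ) = μ₀ := by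
      apply Complex.ext <;> simp [him]
    have hr : p.IsRoot μ₀.re := by
      have h0 := hroot μ₀ hμ₀
      rw [← hμre, ← Complex.coe_algebraMap, aeval_algebraMap_apply] at h0
      have h1 : aeval μ₀.re p = 0 := by
        exact (map_eq_zero_iff (algebraMap ℝ ℂ) (algebraMap ℝ ℂ).injective).1 h0
      simpa using h1
    have hdeg1 : p.degree = 1 := degree_eq_one_of_irreducible_of_root hpirr hr
    have hc1 : p.coeff 1 ≠ 0 := by
      have : p.natDegree = 1 := natDegree_eq_of_degree_eq_some hdeg1
      rw [← this]
      exact fun h => (leadingCoeff_ne_zero.2 hpirr.ne_zero) h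
    have huniq : ∀ μ ∈ S, μ = μ₀ := by
      intro μ hμ
      have hpform : p = C (p.coeff 1) * X + C (p.coeff 0) :=
        eq_X_add_C_of_degree_le_one hdeg1.le
      have e1 : (p.coeff 1 : ℂ) * μ + (p.coeff 0 : ℂ) = 0 := by
        have := hroot μ hμ
        rw [hpform] at this; simpa using this
      have e2 : (p.coeff 1 : ℂ) * μ₀ + (p.coeff 0 : ℂ) = 0 := by
        have := hroot μ₀ hμ₀
        rw [hpform] at this; simpa using this
      have hc1' : (p.coeff 1 : ℂ) ≠ 0 := by exact_mod_cast hc1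
      have := sub_eq_zero.2 (e1.trans e2.symm)
      rw [add_sub_add_right_eq_sub, ← mul_sub] at this
      rcases mul_eq_zero.1 this with h | h
      · exact absurd h hc1'
      · exact sub_eq_zero.1 h
    apply Set.eq_singleton_iff_unique_mem.2
    exact ⟨hμre ▸ hμ₀, fun μ hμ => (huniq μ hμ).trans hμre.symm⟩
  · right
    have hps : aeval μ₀ p = 0 := hroot μ₀ hμ₀
    obtain ⟨q, hq⟩ := Polynomial.mul_star_dvd_of_aeval_eq_zero_im_ne_zero p hps him
    have hq0 : q ≠ 0 := by
      intro h0
      rw [h0, mul_zero] at hq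
      exact (Polynomial.map_ne_zero hpirr.ne_zero) hq
    have hfac0 : (X - C ((starRingEnd ℂ) μ₀)) * (X - C μ₀) ≠ 0 :=
      mul_ne_zero (X_sub_C_ne_zero _) (X_sub_C_ne_zero _)
    have hnd : (p.map (algebraMap ℝ ℂ)).natDegree ≤ 2 := by
      rw [natDegree_map_eq_of_injective (algebraMap ℝ ℂ).injective]
      exact hpirr.natDegree_le_two
    have hfacnd : ((X - C ((starRingEnd ℂ) μ₀)) * (X - C μ₀)).natDegree = 2 := by
      rw [natDegree_mul (X_sub_C_ne_zero _) (X_sub_C_ne_zero _), natDegree_X_sub_C,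
        natDegree_X_sub_C]
    rw [hq, natDegree_mul hfac0 hq0, hfacnd] at hnd
    have hqnd : q.natDegree = 0 := by omega
    have hqC : q = C (q.coeff 0) := (Polynomial.eq_C_of_natDegree_eq_zero hqnd)
    have hqc0 : q.coeff 0 ≠ 0 := fun h => hq0 (by rw [hqC, h, map_zero])
    have key : ∀ μ ∈ S, μ = μ₀ ∨ μ = (starRingEnd ℂ) μ₀ := by
      intro μ hμ
      have h0 := hroot μ hμ
      rw [aeval_def, ← eval_map] at h0
      rw [hq, hqC] at h0
      simp only [eval_mul, eval_sub, eval_X, eval_C] at h0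
      rcases mul_eq_zero.1 h0 with h | h
      · rcases mul_eq_zero.1 h with h | h
        · right; exact sub_eq_zero.1 h
        · left; exact sub_eq_zero.1 h
      · exact absurd h hqc0
    have hconj0 : (starRingEnd ℂ) μ₀ ∈ S := conj_mem_spectrum_aux ρ hμ₀
    have hSeq : S = {μ₀, (starRingEnd ℂ) μ₀} := by
      apply Set.eq_of_subset_of_subset
      · intro μ hμ
        rcases key μ hμ with h | h
        · exact Or.inl h
        · exact Or.inr h
      · rintro μ (rfl | rfl)
        exacts [hμ₀, hconj0]
    refine ⟨μ₀.re, |μ₀.im|, abs_pos.2 him, ?_⟩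
    rw [hSeq]
    rcases lt_or_gt_of_ne him with hlt | hgt
    · rw [abs_of_neg hlt]
      have e1 : ((μ₀.re : ℂ) + ((-μ₀.im : ℝ) : ℂ) * Complex.I) = (starRingEnd ℂ) μ₀ := by
        simp [Complex.ext_iff]
      have e2 : ((μ₀.re : ℂ) - ((-μ₀.im : ℝ) : ℂ) * Complex.I) = μ₀ := by
        simp [Complex.ext_iff]
      rw [e1, e2, Set.pair_comm]
    · rw [abs_of_pos hgt]
      have e1 : ((μ₀.re : ℂ) + ((μ₀.im : ℝ) : ℂ) * Complex.I) = μ₀ := by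
        simp [Complex.ext_iff]
      have e2 : ((μ₀.re : ℂ) - ((μ₀.im : ℝ) : ℂ) * Complex.I) = (starRingEnd ℂ) μ₀ := by
        simp [Complex.ext_iff]
      rw [e1, e2]

open Polynomial in
theorem statement2
    {V : Type*} [AddCommGroup V] [Module ℝ V] [FiniteDimensional ℝ V] [Nontrivial V]
    (B : LinearMap.BilinForm ℝ V)
    (hBsymm : ∀ x y, B x y = B y x)
    (hBnondeg : ∀ x, (∀ y, B x y = 0) → x = 0)
    (A : V → V → V → V → ℝ) (hA : IsACT A)
    (R : V →ₗ[ℝ] V →ₗ[ℝ] V →ₗ[ℝ] V)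
    (hR : ∀ x y z w, B (R x y z) w = A x y z w)
    (ρ : V →ₗ[ℝ] V)
    (hρ : ∀ x y, B (ρ x) y = ricciForm R x y)
    (hJR : JRComm A ρ)
    (hind : ¬ Decomposable B A) :
    (∃ a₁ : ℝ, spectrum ℂ (LinearMap.baseChange ℂ ρ) = {(a₁ : ℂ)}) ∨
    (∃ a₁ a₂ : ℝ, 0 < a₂ ∧
      spectrum ℂ (LinearMap.baseChange ℂ ρ) =
        {(a₁ : ℂ) + (a₂ : ℂ) * Complex.I, (a₁ : ℂ) - (a₂ : ℂ) * Complex.I}) := by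
  classical
  obtain ⟨hml, -⟩ := hA
  obtain ⟨hadd1, hsm1, hadd2, hsm2, hadd3, hsm3, hadd4, hsm4⟩ := hml
  -- A vanishes if a slot is zero
  have hz1 : ∀ y z w, A 0 y z w = 0 := by
    intro y z w
    have := hsm1 0 0 y z w
    simpa using this
  have hz2 : ∀ x z w, A x 0 z w = 0 := by
    intro x z w
    have := hsm2 0 x 0 z w
    simpa using this
  have hz3 : ∀ x y w, A x y 0 w = 0 := by
    intro x y w
    have := hsm3 0 x y 0 w
    simpa using this
  have hz4 : ∀ x y z, A x y z 0 = 0 := by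
    intro x y z
    have := hsm4 0 x y z 0
    simpa using this
  -- self-adjointness of ρ
  have hric : ∀ x y, ricciForm R x y = ricciForm R y x := by
    intro x y; unfold ricciForm; rw [add_comm]
  have hBsa : ∀ x y, B (ρ x) y = B x (ρ y) := by
    intro x y
    rw [hρ x y, hric x y, ← hρ y x]
    exact hBsymm (ρ y) x
  have hBpow : ∀ n : ℕ, ∀ x y, B ((ρ ^ n) x) y = B x ((ρ ^ n) y) := by
    intro n
    induction n with
    | zero => intro x y; simp
    | succ n ih =>
      intro x y
      have hcomm : ∀ v : V, ρ ((ρ ^ n) v) = (ρ ^ n) (ρ v) := by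
        intro v
        rw [← Module.End.mul_apply, ← Module.End.mul_apply, pow_mul_comm']
      rw [pow_succ, Module.End.mul_apply, Module.End.mul_apply, ih (ρ x) y, hBsa, hcomm]
  have hBpoly : ∀ (s : ℝ[X]) (x y : V), B ((aeval ρ s) x) y = B x ((aeval ρ s) y) := by
    intro s x y
    rw [Polynomial.aeval_eq_sum_range]
    simp only [LinearMap.sum_apply, LinearMap.smul_apply, map_sum, map_smul,
      LinearMap.smul_apply, smul_eq_mul]
    exact Finset.sum_congr rfl fun i _ => by rw [hBpow i]
  -- Jacobi–Ricci commuting for powers and polynomials of ρ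
  have hA1 : ∀ x y z w, A (ρ x) y z w = A x (ρ y) z w := fun x y z w => (hJR x y z w).1
  have hA2 : ∀ x y z w, A x (ρ y) z w = A x y (ρ z) w := fun x y z w => (hJR x y z w).2.1
  have hA3 : ∀ x y z w, A x y (ρ z) w = A x y z (ρ w) := fun x y z w => (hJR x y z w).2.2
  have hApow : ∀ n : ℕ, ∀ x y z w, A ((ρ ^ n) x) y z w = A x ((ρ ^ n) y) z w
      ∧ A x ((ρ ^ n) y) z w = A x y ((ρ ^ n) z) w
      ∧ A x y ((ρ ^ n) z) w = A x y z ((ρ ^ n) w) := by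
    intro n
    induction n with
    | zero => intro x y z w; simp
    | succ n ih =>
      intro x y z w
      have hcomm : ∀ v : V, ρ ((ρ ^ n) v) = (ρ ^ n) (ρ v) := by
        intro v
        rw [← Module.End.mul_apply, ← Module.End.mul_apply, pow_mul_comm']
      refine ⟨?_, ?_, ?_⟩
      · rw [pow_succ, Module.End.mul_apply, Module.End.mul_apply, (ih (ρ x) y z w).1,
          hA1 x ((ρ ^ n) y) z w, hcomm]
      · rw [pow_succ, Module.End.mul_apply, Module.End.mul_apply, (ih x (ρ y) z w).2.1,
          hA2 x y ((ρ ^ n) z) w, hcomm]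
      · rw [pow_succ, Module.End.mul_apply, Module.End.mul_apply, (ih x y (ρ z) w).2.2,
          hA3 x y z ((ρ ^ n) w), hcomm]
  -- finite sums in each slot
  have hsum1 : ∀ (t : Finset ℕ) (f : ℕ → V) (y z w : V),
      A (∑ i ∈ t, f i) y z w = ∑ i ∈ t, A (f i) y z w := by
    intro t f y z w
    exact map_sum (AddMonoidHom.mk' (fun v => A v y z w) (fun a b => hadd1 a b y z w)) f t
  have hsum2 : ∀ (t : Finset ℕ) (f : ℕ → V) (x z w : V),
      A x (∑ i ∈ t, f i) z w = ∑ i ∈ t, A x (f i) z w := by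
    intro t f x z w
    exact map_sum (AddMonoidHom.mk' (fun v => A x v z w) (fun a b => hadd2 x a b z w)) f t
  have hsum3 : ∀ (t : Finset ℕ) (f : ℕ → V) (x y w : V),
      A x y (∑ i ∈ t, f i) w = ∑ i ∈ t, A x y (f i) w := by
    intro t f x y w
    exact map_sum (AddMonoidHom.mk' (fun v => A x y v w) (fun a b => hadd3 x y a b w)) f t
  have hsum4 : ∀ (t : Finset ℕ) (f : ℕ → V) (x y z : V),
      A x y z (∑ i ∈ t, f i) = ∑ i ∈ t, A x y z (f i) := by
    intro t f x y z
    exact map_sum (AddMonoidHom.mk' (fun v => A x y z v) (fun a b => hadd4 x y z a b)) f t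
  have hAp1 : ∀ (s : ℝ[X]) (x y z w : V),
      A ((aeval ρ s) x) y z w = A x ((aeval ρ s) y) z w := by
    intro s x y z w
    rw [Polynomial.aeval_eq_sum_range]
    simp only [LinearMap.sum_apply, LinearMap.smul_apply]
    rw [hsum1, hsum2]
    refine Finset.sum_congr rfl fun i _ => ?_
    rw [hsm1, hsm2, (hApow i x y z w).1]
  have hAp2 : ∀ (s : ℝ[X]) (x y z w : V),
      A x ((aeval ρ s) y) z w = A x y ((aeval ρ s) z) w := by
    intro s x y z w
    rw [Polynomial.aeval_eq_sum_range]
    simp only [LinearMap.sum_apply, LinearMap.smul_apply]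
    rw [hsum2, hsum3]
    refine Finset.sum_congr rfl fun i _ => ?_
    rw [hsm2, hsm3, (hApow i x y z w).2.1]
  have hAp3 : ∀ (s : ℝ[X]) (x y z w : V),
      A x y ((aeval ρ s) z) w = A x y z ((aeval ρ s) w) := by
    intro s x y z w
    rw [Polynomial.aeval_eq_sum_range]
    simp only [LinearMap.sum_apply, LinearMap.smul_apply]
    rw [hsum3, hsum4]
    refine Finset.sum_congr rfl fun i _ => ?_
    rw [hsm3, hsm4, (hApow i x y z w).2.2]
  -- minimal polynomial setup
  have hint : IsIntegral ℝ ρ := Algebra.IsIntegral.isIntegral (R := ℝ) ρ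
  have hm0 : minpoly ℝ ρ ≠ 0 := minpoly.ne_zero hint
  have hmdeg : 0 < (minpoly ℝ ρ).natDegree := minpoly.natDegree_pos hint
  have hmnu : ¬ IsUnit (minpoly ℝ ρ) := by
    intro h
    rw [Polynomial.isUnit_iff] at h
    obtain ⟨r, -, hr⟩ := h
    rw [← hr] at hmdeg
    simp at hmdeg
  obtain ⟨p, hpirr, hpdvd⟩ := WfDvdMonoid.exists_irreducible_factor hmnu hm0
  obtain ⟨g, hmfac, hgnd⟩ :=
    (FiniteMultiplicity.of_not_isUnit hpirr.not_isUnit hm0).exists_eq_pow_mul_and_not_dvd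
  set k : ℕ := multiplicity p (minpoly ℝ ρ) with hkdef
  clear_value k
  -- hmfac : minpoly ℝ ρ = p ^ k * g
  have hcop : IsCoprime (p ^ k) g := (Irreducible.coprime_pow_of_not_dvd k hpirr hgnd).symm
  obtain ⟨uu, vv, huv⟩ := hcop
  have hcommE : ∀ (a b : ℝ[X]) (x : V),
      (aeval ρ a) ((aeval ρ b) x) = (aeval ρ b) ((aeval ρ a) x) := by
    intro a b x
    rw [← Module.End.mul_apply, ← Module.End.mul_apply, ← map_mul, ← map_mul, mul_comm a b]
  have hPG : ∀ x : V, (aeval ρ (p ^ k)) ((aeval ρ g) x) = 0 := by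
    intro x
    rw [← Module.End.mul_apply, ← map_mul, ← hmfac, minpoly.aeval, LinearMap.zero_apply]
  have hGP : ∀ x : V, (aeval ρ g) ((aeval ρ (p ^ k)) x) = 0 := by
    intro x
    rw [hcommE]
    exact hPG x
  have hid : ∀ x : V, (aeval ρ uu) ((aeval ρ (p ^ k)) x) + (aeval ρ vv) ((aeval ρ g) x) = x := by
    intro x
    have h1 : (aeval ρ uu) * (aeval ρ (p ^ k)) + (aeval ρ vv) * (aeval ρ g)
        = (1 : Module.End ℝ V) := by
      rw [← map_mul, ← map_mul, ← map_add, huv, map_one]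
    have := LinearMap.ext_iff.1 h1 x
    simpa [LinearMap.add_apply, Module.End.mul_apply] using this
  have hrecover : ∀ y : V, (aeval ρ g) y = 0 →
      y = (aeval ρ (p ^ k)) ((aeval ρ uu) y) := by
    intro y hy
    have h1 := hid y
    rw [hy, map_zero, add_zero] at h1
    rw [hcommE uu (p ^ k) y] at h1
    exact h1.symm
  -- the complementary factor is a unit, else the model would be decomposable
  have hgunit : IsUnit g := by
    by_contra hgu
    apply hind
    refine ⟨LinearMap.ker (aeval ρ (p ^ k)), LinearMap.ker (aeval ρ g), ?_, ?_, ?_, ?_, ?_⟩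
    · -- ker (p^k)(ρ) ≠ ⊥
      intro hbot
      have hG0 : aeval ρ g = 0 := by
        apply LinearMap.ext; intro x
        have h1 : (aeval ρ g) x ∈ LinearMap.ker (aeval ρ (p ^ k)) := by
          rw [LinearMap.mem_ker]
          exact hPG x
        rw [hbot] at h1
        simpa using h1
      have hdvd1 : minpoly ℝ ρ ∣ g := minpoly.dvd ℝ ρ hG0
      exact hgnd (dvd_trans hpdvd hdvd1)
    · -- ker g(ρ) ≠ ⊥
      intro hbot
      have hP0 : aeval ρ (p ^ k) = 0 := by
        apply LinearMap.ext; intro x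
        have h1 : (aeval ρ (p ^ k)) x ∈ LinearMap.ker (aeval ρ g) := by
          rw [LinearMap.mem_ker]
          exact hGP x
        rw [hbot] at h1
        simpa using h1
      obtain ⟨t, ht⟩ := minpoly.dvd ℝ ρ hP0
      rw [hmfac] at ht
      have hpk0 : p ^ k ≠ 0 := pow_ne_zero k hpirr.ne_zero
      have h2 : p ^ k * 1 = p ^ k * (g * t) := by
        rw [mul_one, ← mul_assoc, ← ht]
      have h3 : (1 : ℝ[X]) = g * t := mul_left_cancel₀ hpk0 h2
      exact hgu (IsUnit.of_mul_eq_one (a := g) t h3.symm)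
    · constructor
      · rw [Submodule.disjoint_def]
        intro x hx1 hx2
        rw [LinearMap.mem_ker] at hx1 hx2
        have := hid x
        rw [hx1, hx2, map_zero, map_zero, add_zero] at this
        exact this.symm
      · rw [codisjoint_iff, eq_top_iff]
        intro x _
        rw [Submodule.mem_sup]
        refine ⟨(aeval ρ vv) ((aeval ρ g) x), ?_, (aeval ρ uu) ((aeval ρ (p ^ k)) x), ?_, ?_⟩
        · rw [LinearMap.mem_ker, hcommE (p ^ k) vv]
          rw [hPG, map_zero]
        · rw [LinearMap.mem_ker, hcommE g uu]
          rw [hGP, map_zero]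
        · rw [add_comm]
          exact hid x
    · -- orthogonality of the two pieces
      intro x hx y hy
      rw [LinearMap.mem_ker] at hx hy
      rw [hrecover y hy, ← hBpoly (p ^ k) x ((aeval ρ uu) y), hx]
      simp
    · -- curvature decoupling
      intro v i j hij hvi hvj
      rw [LinearMap.mem_ker] at hvi hvj
      fin_cases i <;> fin_cases j
      · exact absurd rfl hij
      · -- i = 0, j = 1
        have h1 : (aeval ρ (p ^ k)) (v 0) = 0 := hvi
        have h2 : (aeval ρ g) (v 1) = 0 := hvj
        rw [hrecover (v 1) h2, ← hAp1 (p ^ k) (v 0) ((aeval ρ uu) (v 1)) (v 2) (v 3), h1]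
        exact hz1 _ _ _
      · -- i = 0, j = 2
        have h1 : (aeval ρ (p ^ k)) (v 0) = 0 := hvi
        have h2 : (aeval ρ g) (v 2) = 0 := hvj
        rw [hrecover (v 2) h2, ← hAp2 (p ^ k) (v 0) (v 1) ((aeval ρ uu) (v 2)) (v 3),
          ← hAp1 (p ^ k) (v 0) (v 1) ((aeval ρ uu) (v 2)) (v 3), h1]
        exact hz1 _ _ _
      · -- i = 0, j = 3
        have h1 : (aeval ρ (p ^ k)) (v 0) = 0 := hvi
        have h2 : (aeval ρ g) (v 3) = 0 := hvj
        rw [hrecover (v 3) h2, ← hAp3 (p ^ k) (v 0) (v 1) (v 2) ((aeval ρ uu) (v 3)),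
          ← hAp2 (p ^ k) (v 0) (v 1) (v 2) ((aeval ρ uu) (v 3)),
          ← hAp1 (p ^ k) (v 0) (v 1) (v 2) ((aeval ρ uu) (v 3)), h1]
        exact hz1 _ _ _
      · -- i = 1, j = 0
        have h1 : (aeval ρ (p ^ k)) (v 1) = 0 := hvi
        have h2 : (aeval ρ g) (v 0) = 0 := hvj
        rw [hrecover (v 0) h2, hAp1 (p ^ k) ((aeval ρ uu) (v 0)) (v 1) (v 2) (v 3), h1]
        exact hz2 _ _ _
      · exact absurd rfl hij
      · -- i = 1, j = 2
        have h1 : (aeval ρ (p ^ k)) (v 1) = 0 := hvi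
        have h2 : (aeval ρ g) (v 2) = 0 := hvj
        rw [hrecover (v 2) h2, ← hAp2 (p ^ k) (v 0) (v 1) ((aeval ρ uu) (v 2)) (v 3), h1]
        exact hz2 _ _ _
      · -- i = 1, j = 3
        have h1 : (aeval ρ (p ^ k)) (v 1) = 0 := hvi
        have h2 : (aeval ρ g) (v 3) = 0 := hvj
        rw [hrecover (v 3) h2, ← hAp3 (p ^ k) (v 0) (v 1) (v 2) ((aeval ρ uu) (v 3)),
          ← hAp2 (p ^ k) (v 0) (v 1) (v 2) ((aeval ρ uu) (v 3)), h1]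
        exact hz2 _ _ _
      · -- i = 2, j = 0
        have h1 : (aeval ρ (p ^ k)) (v 2) = 0 := hvi
        have h2 : (aeval ρ g) (v 0) = 0 := hvj
        rw [hrecover (v 0) h2, hAp1 (p ^ k) ((aeval ρ uu) (v 0)) (v 1) (v 2) (v 3),
          hAp2 (p ^ k) ((aeval ρ uu) (v 0)) (v 1) (v 2) (v 3), h1]
        exact hz3 _ _ _
      · -- i = 2, j = 1
        have h1 : (aeval ρ (p ^ k)) (v 2) = 0 := hvi
        have h2 : (aeval ρ g) (v 1) = 0 := hvj
        rw [hrecover (v 1) h2, hAp2 (p ^ k) (v 0) ((aeval ρ uu) (v 1)) (v 2) (v 3), h1]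
        exact hz3 _ _ _
      · exact absurd rfl hij
      · -- i = 2, j = 3
        have h1 : (aeval ρ (p ^ k)) (v 2) = 0 := hvi
        have h2 : (aeval ρ g) (v 3) = 0 := hvj
        rw [hrecover (v 3) h2, ← hAp3 (p ^ k) (v 0) (v 1) (v 2) ((aeval ρ uu) (v 3)), h1]
        exact hz3 _ _ _
      · -- i = 3, j = 0
        have h1 : (aeval ρ (p ^ k)) (v 3) = 0 := hvi
        have h2 : (aeval ρ g) (v 0) = 0 := hvj
        rw [hrecover (v 0) h2, hAp1 (p ^ k) ((aeval ρ uu) (v 0)) (v 1) (v 2) (v 3),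
          hAp2 (p ^ k) ((aeval ρ uu) (v 0)) (v 1) (v 2) (v 3),
          hAp3 (p ^ k) ((aeval ρ uu) (v 0)) (v 1) (v 2) (v 3), h1]
        exact hz4 _ _ _
      · -- i = 3, j = 1
        have h1 : (aeval ρ (p ^ k)) (v 3) = 0 := hvi
        have h2 : (aeval ρ g) (v 1) = 0 := hvj
        rw [hrecover (v 1) h2, hAp2 (p ^ k) (v 0) ((aeval ρ uu) (v 1)) (v 2) (v 3),
          hAp3 (p ^ k) (v 0) ((aeval ρ uu) (v 1)) (v 2) (v 3), h1]
        exact hz4 _ _ _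
      · -- i = 3, j = 2
        have h1 : (aeval ρ (p ^ k)) (v 3) = 0 := hvi
        have h2 : (aeval ρ g) (v 2) = 0 := hvj
        rw [hrecover (v 2) h2, hAp3 (p ^ k) (v 0) (v 1) ((aeval ρ uu) (v 2)) (v 3), h1]
        exact hz4 _ _ _
      · exact absurd rfl hij
  -- conclude via the spectral analysis
  obtain ⟨r, hru, hrC⟩ := Polynomial.isUnit_iff.1 hgunit
  have hr0 : r ≠ 0 := hru.ne_zero
  have hk0 : k ≠ 0 := by
    rintro rfl
    rw [pow_zero, one_mul, ← hrC] at hmfac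
    rw [hmfac] at hmdeg
    simp at hmdeg
  apply spec_cases_aux ρ p hpirr
  intro μ hμ
  rw [hmfac, ← hrC, Polynomial.map_mul, Polynomial.map_pow, Polynomial.map_C] at hμ
  rw [Polynomial.IsRoot, Polynomial.eval_mul, Polynomial.eval_pow, Polynomial.eval_C] at hμ
  rcases mul_eq_zero.1 hμ with h | h
  · have h5 : Polynomial.eval μ (p.map (algebraMap ℝ ℂ)) = 0 := pow_eq_zero_iff hk0 |>.1 h
    rw [aeval_def, ← Polynomial.eval_map]
    exact h5
  · exact absurd h (by simpa using hr0)
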